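/- Let H be a real Hilbert space and let Ω : H → ℝ satisfy Ω(w + p) ≥ Ω(w) for all w, p ∈ H with ⟨w, p⟩ = 0. Then for any x₁, …, x_m ∈ H and y₁, …, y_m ∈ ℝ, if the problem min{Ω(w) : ⟨w, x_i⟩ = y_i, i = 1,…,m} has a solution ŵ, then its orthogonal projection w̄ of ŵ onto span{x₁, …, x_m} is also a solution. -/

import Mathlib

theorem stmt_19 {H : Type*} [NormedAddCommGroup H] [InnerProductSpace ℝ H]
    [CompleteSpace H] (Ω : H → ℝ)
    (hΩ : ∀ w p : H, inner ℝ w p = (0 : ℝ) → Ω w ≤ Ω (w + p))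
    (m : ℕ) (x : Fin m → H) (y : Fin m → ℝ) (what : H)
    (hconstr : ∀ i, inner ℝ what (x i) = y i)
    (hmin : ∀ w : H, (∀ i, inner ℝ w (x i) = y i) → Ω what ≤ Ω w)
    (wbar : H) (hwbar : wbar ∈ Submodule.span ℝ (Set.range x))
    (hproj : ∀ v ∈ Submodule.span ℝ (Set.range x), inner ℝ (what - wbar) v = (0 : ℝ)) :
    (∀ i, inner ℝ wbar (x i) = y i) ∧
      ∀ w : H, (∀ i, inner ℝ w (x i) = y i) → Ω wbar ≤ Ω w := by
  have hxi : ∀ i, x i ∈ Submodule.span ℝ (Set.range x) := fun i =>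
    Submodule.subset_span ⟨i, rfl⟩
  have hc : ∀ i, inner ℝ wbar (x i) = y i := by
    intro i
    have h := hproj (x i) (hxi i)
    rw [inner_sub_left] at h
    have : inner ℝ wbar (x i) = inner ℝ what (x i) := by linarith
    rw [this, hconstr]
  refine ⟨hc, fun w hw => ?_⟩
  have h0 : inner ℝ wbar (what - wbar) = (0 : ℝ) := by
    rw [real_inner_comm]; exact hproj wbar hwbar
  have h1 : Ω wbar ≤ Ω what := by
    have := hΩ wbar (what - wbar) h0
    simpa using this
  exact h1.trans (hmin w hw)
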